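/- Let λ₁ ≥ λ₂ ≥ 0, α ∈ [0, 1/2], |γ| ≤ 1. Define for u,v with u²+v²=1: a = λ₁u²+λ₂v², b = (λ₁−λ₂)uv, c = λ₂u²+λ₁v², δ = α(a+c) + γ(1−2α)sgn(b)·b, and m₊ = a + b + c − δ. Then the maximum of m₊ over all such (u,v) equals (1−α)(λ₁+λ₂) + (1/2)(1−γ(1−2α))(λ₁−λ₂), attained at u = v = 1/√2. -/
import Mathlib


/-- The quantity m₊ = a + b + c − δ as a function of the eigenvector entries (u, v). -/
noncomputable def mPlus (l1 l2 α γ u v : ℝ) : ℝ :=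
  let a := l1 * u ^ 2 + l2 * v ^ 2
  let b := (l1 - l2) * (u * v)
  let c := l2 * u ^ 2 + l1 * v ^ 2
  let δ := α * (a + c) + γ * (1 - 2 * α) * Real.sign b * b
  a + b + c - δ

lemma sign_mul_self' (x : ℝ) : Real.sign x * x = |x| := by
  rcases lt_trichotomy x 0 with h | h | h
  · rw [Real.sign_of_neg h, abs_of_neg h]; ring
  · simp [h]
  · rw [Real.sign_of_pos h, abs_of_pos h]; ring

lemma mPlus_val (l1 l2 α γ : ℝ) (h12 : l2 ≤ l1) :
    mPlus l1 l2 α γ (1 / Real.sqrt 2) (1 / Real.sqrt 2) =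
      (1 - α) * (l1 + l2) + (1 / 2) * (1 - γ * (1 - 2 * α)) * (l1 - l2) := by
  have hs : (1 / Real.sqrt 2 : ℝ) ^ 2 = 1 / 2 := by
    rw [div_pow, one_pow, Real.sq_sqrt (by norm_num : (0:ℝ) ≤ 2)]
  have hm : (1 / Real.sqrt 2 : ℝ) * (1 / Real.sqrt 2) = 1 / 2 := by
    rw [← sq]; exact hs
  have hsg : ∀ x : ℝ, γ * (1 - 2 * α) * Real.sign x * x = γ * (1 - 2 * α) * |x| := by
    intro x; rw [mul_assoc, sign_mul_self']
  simp only [mPlus, hs, hm, hsg]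
  have : |(l1 - l2) * (1 / 2 : ℝ)| = (l1 - l2) * (1 / 2) := by
    apply abs_of_nonneg; nlinarith
  rw [this]; ring

theorem max_mPlus (l1 l2 α γ : ℝ)
    (h12 : l2 ≤ l1) (h2 : 0 ≤ l2)
    (hα : α ∈ Set.Icc (0 : ℝ) (1 / 2)) (hγ : |γ| ≤ 1) :
    IsGreatest {m : ℝ | ∃ u v : ℝ, u ^ 2 + v ^ 2 = 1 ∧ m = mPlus l1 l2 α γ u v}
      ((1 - α) * (l1 + l2) + (1 / 2) * (1 - γ * (1 - 2 * α)) * (l1 - l2)) ∧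
    mPlus l1 l2 α γ (1 / Real.sqrt 2) (1 / Real.sqrt 2) =
      (1 - α) * (l1 + l2) + (1 / 2) * (1 - γ * (1 - 2 * α)) * (l1 - l2) := by
  obtain ⟨hα0, hα2⟩ := hα
  have hsq : (1 / Real.sqrt 2 : ℝ) ^ 2 + (1 / Real.sqrt 2) ^ 2 = 1 := by
    rw [div_pow, one_pow, Real.sq_sqrt (by norm_num : (0:ℝ) ≤ 2)]; norm_num
  refine ⟨⟨⟨1 / Real.sqrt 2, 1 / Real.sqrt 2, hsq, (mPlus_val l1 l2 α γ h12).symm⟩, ?_⟩,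
    mPlus_val l1 l2 α γ h12⟩
  rintro m ⟨u, v, huv, rfl⟩
  have hsg : ∀ x : ℝ, γ * (1 - 2 * α) * Real.sign x * x = γ * (1 - 2 * α) * |x| := by
    intro x; rw [mul_assoc, sign_mul_self']
  simp only [mPlus, hsg]
  -- k = γ * (1 - 2α), |k| ≤ 1
  have hk1 : γ * (1 - 2 * α) ≤ 1 := by
    have h1 : |γ * (1 - 2 * α)| ≤ 1 := by
      rw [abs_mul]
      have : |1 - 2 * α| ≤ 1 := by rw [abs_le]; constructor <;> linarith
      calc |γ| * |1 - 2 * α| ≤ 1 * 1 := by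
            apply mul_le_mul hγ this (abs_nonneg _) (by norm_num)
        _ = 1 := by norm_num
    linarith [abs_le.mp h1 |>.2]
  have hb : |(l1 - l2) * (u * v)| ≤ (l1 - l2) / 2 := by
    rw [abs_mul, abs_of_nonneg (by linarith : (0:ℝ) ≤ l1 - l2)]
    have huv2 : |u * v| ≤ 1 / 2 := by
      rw [abs_le]
      constructor <;> nlinarith [sq_nonneg (u + v), sq_nonneg (u - v)]
    nlinarith [abs_nonneg (u * v)]
  have hle := le_abs_self ((l1 - l2) * (u * v))
  have hprod : 0 ≤ (1 - γ * (1 - 2 * α)) * ((l1 - l2) / 2 - |(l1 - l2) * (u * v)|) :=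
    mul_nonneg (by linarith) (by linarith)
  have key : l1 * u ^ 2 + l2 * v ^ 2 + (l1 - l2) * (u * v) + (l2 * u ^ 2 + l1 * v ^ 2) -
      (α * (l1 * u ^ 2 + l2 * v ^ 2 + (l2 * u ^ 2 + l1 * v ^ 2)) +
        γ * (1 - 2 * α) * |(l1 - l2) * (u * v)|) =
      (1 - α) * (l1 + l2) + (l1 - l2) * (u * v) -
        γ * (1 - 2 * α) * |(l1 - l2) * (u * v)| := by
    linear_combination (1 - α) * (l1 + l2) * huv
  rw [key]
  nlinarith [hprod, hle]
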